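/- For every k ≥ 0, the language L(A_k) is (k+1)-piecewise testable, where A_k is the NFA with states {0, 1, …, k}, alphabet {a_0, a_1, …, a_k}, all states initial, accepting state 0, and transitions: i·a_j = {i} whenever k ≥ i > j ≥ 0, and i·a_i = {0, 1, …, i−1} whenever k ≥ i ≥ 1 (no other transitions). -/

import Mathlib

/-- `subk k w` is the set of scattered subwords of `w` of length at most `k`. -/
def subk {α : Type*} (k : ℕ) (w : List α) : Set (List α) :=
  {u | u.length ≤ k ∧ u.Sublist w}

/-- Two words are `k`-equivalent if they have the same subwords of length at most `k`. -/
def kEquiv {α : Type*} (k : ℕ) (u v : List α) : Prop :=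
  subk k u = subk k v

/-- A language is `k`-piecewise testable (Simon's characterization):
`k`-equivalent words are equi-members. -/
def IsPT {α : Type*} (k : ℕ) (L : Language α) : Prop :=
  ∀ u v : List α, kEquiv k u v → (u ∈ L ↔ v ∈ L)

/-- A DFA is minimal if all states are reachable and pairwise distinguishable. -/
def IsMinimalDFA {α σ : Type*} (A : DFA α σ) : Prop :=
  (∀ q : σ, ∃ w : List α, A.eval w = q) ∧
  ∀ p q : σ,
    (∀ w : List α, (A.evalFrom p w ∈ A.accept ↔ A.evalFrom q w ∈ A.accept)) → p = q

/-- There is a simple path (pairwise distinct states) with `m` transitions in the DFA `A`. -/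
def DFAHasSimplePath {α σ : Type*} (A : DFA α σ) (m : ℕ) : Prop :=
  ∃ (qs : Fin (m + 1) → σ) (as : Fin m → α),
    Function.Injective qs ∧ ∀ i : Fin m, A.step (qs i.castSucc) (as i) = qs i.succ

/-- The depth of a DFA: the number of transitions on a longest simple path. -/
noncomputable def dfaDepth {α σ : Type*} (A : DFA α σ) : ℕ :=
  sSup {m | DFAHasSimplePath A m}

/-- There is a simple path (pairwise distinct states) with `m` transitions in the NFA `A`. -/
def NFAHasSimplePath {α σ : Type*} (A : NFA α σ) (m : ℕ) : Prop :=
  ∃ (qs : Fin (m + 1) → σ) (as : Fin m → α),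
    Function.Injective qs ∧ ∀ i : Fin m, qs i.succ ∈ A.step (qs i.castSucc) (as i)

/-- The depth of an NFA: the number of transitions on a longest simple path. -/
noncomputable def nfaDepth {α σ : Type*} (A : NFA α σ) : ℕ :=
  sSup {m | NFAHasSimplePath A m}

/-- The NFA `A_k`: states `{0,…,k}`, alphabet `{a_0,…,a_k}` (both modeled by
`Fin (k+1)`), all states initial, accepting state `0`, with `i·a_j = {i}` for
`i > j` and `i·a_i = {0,…,i-1}` for `i ≥ 1` (no other transitions). -/
def Ak (k : ℕ) : NFA (Fin (k + 1)) (Fin (k + 1)) where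
  step := fun q a =>
    if a < q then {q} else if q = a ∧ 0 < q then {p | p < q} else ∅
  start := Set.univ
  accept := {0}

namespace Stmt11Aux

open List

/-- Combinatorial characterization of the language of `Ak`: a word is good if it
decomposes into blocks with strictly decreasing positive "marks". -/
inductive Good {k : ℕ} : List (Fin (k + 1)) → Prop
  | nil : Good []
  | block {c : Fin (k + 1)} {u w : List (Fin (k + 1))} :
      (∀ a ∈ u, a < c) → (∀ a ∈ w, a < c) → 0 < c → Good w → Good (u ++ c :: w)

lemma mem_evalFrom_iff {α σ : Type*} (M : NFA α σ) (w : List α) (S : Set σ) (x : σ) :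
    x ∈ M.evalFrom S w ↔ ∃ q ∈ S, x ∈ M.evalFrom {q} w := by
  induction w generalizing S with
  | nil => simp
  | cons a t ih =>
    show x ∈ M.evalFrom (M.stepSet S a) t ↔ ∃ q ∈ S, x ∈ M.evalFrom (M.stepSet {q} a) t
    rw [ih]
    constructor
    · rintro ⟨p, hp, hx⟩
      rw [M.mem_stepSet] at hp
      obtain ⟨q, hq, hpq⟩ := hp
      refine ⟨q, hq, ?_⟩
      rw [ih]
      exact ⟨p, by rw [M.mem_stepSet]; exact ⟨q, rfl, hpq⟩, hx⟩
    · rintro ⟨q, hq, hx⟩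
      rw [ih] at hx
      obtain ⟨p, hp, hx⟩ := hx
      rw [M.mem_stepSet] at hp
      obtain ⟨q', hq', hpq⟩ := hp
      refine ⟨p, ?_, hx⟩
      rw [M.mem_stepSet]
      exact ⟨q, hq, (show q' = q from hq') ▸ hpq⟩

lemma evalFrom_mono {α σ : Type*} (M : NFA α σ) {S T : Set σ} (h : S ⊆ T) (w : List α) :
    M.evalFrom S w ⊆ M.evalFrom T w := by
  intro x hx
  rw [mem_evalFrom_iff] at hx ⊢
  obtain ⟨q, hq, hx⟩ := hx
  exact ⟨q, h hq, hx⟩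

lemma evalFrom_append {α σ : Type*} (M : NFA α σ) (S : Set σ) (x y : List α) :
    M.evalFrom S (x ++ y) = M.evalFrom (M.evalFrom S x) y := by
  simp [NFA.evalFrom, List.foldl_append]

lemma stay {k : ℕ} {q : Fin (k + 1)} :
    ∀ {u : List (Fin (k + 1))}, (∀ a ∈ u, a < q) → ∀ {S : Set (Fin (k + 1))}, q ∈ S →
      q ∈ (Ak k).evalFrom S u := by
  intro u
  induction u with
  | nil => intro _ S hq; exact hq
  | cons a t ih =>
    intro hu S hq
    have ha : a < q := hu a (by simp)
    refine ih (fun b hb => hu b (by simp [hb])) ?_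
    rw [NFA.mem_stepSet]
    refine ⟨q, hq, ?_⟩
    simp [Ak, ha]

lemma good_eval {k : ℕ} {w : List (Fin (k + 1))} (h : Good w) :
    ∀ d : Fin (k + 1), (∀ a ∈ w, a < d) → 0 < d →
      (0 : Fin (k + 1)) ∈ (Ak k).evalFrom {p | p < d} w := by
  induction h with
  | nil => intro d _ hd; exact hd
  | @block c u w' hu hw hc hg ih =>
    intro d hd hd0
    have hcd : c < d := hd c (by simp)
    have hcS : c ∈ ({p | p < d} : Set (Fin (k + 1))) := hcd
    have h1 : c ∈ (Ak k).evalFrom {p | p < d} u := stay hu hcS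
    have h2 : ({p | p < c} : Set (Fin (k + 1))) ⊆
        (Ak k).stepSet ((Ak k).evalFrom {p | p < d} u) c := by
      intro x hx
      rw [NFA.mem_stepSet]
      refine ⟨c, h1, ?_⟩
      simp only [Ak, lt_irrefl, if_false, hc, and_true, if_pos rfl]
      exact hx
    have h3 := ih c (fun a ha => hw a ha) hc
    have : (0 : Fin (k + 1)) ∈ (Ak k).evalFrom
        ((Ak k).stepSet ((Ak k).evalFrom {p | p < d} u) c) w' :=
      evalFrom_mono _ h2 w' h3
    have heq : u ++ c :: w' = (u ++ [c]) ++ w' := by simp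
    rw [heq, evalFrom_append, evalFrom_append]
    simpa using this

lemma run_char {k : ℕ} :
    ∀ (w : List (Fin (k + 1))) (q : Fin (k + 1)),
      (0 : Fin (k + 1)) ∈ (Ak k).evalFrom {q} w →
      (w = [] ∧ q = 0) ∨
        ∃ u w', w = u ++ q :: w' ∧ (∀ a ∈ u, a < q) ∧ 0 < q ∧
          (∀ a ∈ w', a < q) ∧ Good w' := by
  intro w
  induction w with
  | nil =>
    intro q hq
    left
    refine ⟨rfl, ?_⟩
    have : (0 : Fin (k + 1)) ∈ ({q} : Set (Fin (k + 1))) := hq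
    exact (Set.mem_singleton_iff.mp this).symm
  | cons a t ih =>
    intro q hq
    have hstep : (Ak k).stepSet {q} a = (Ak k).step q a := by
      simp [NFA.stepSet]
    have hq' : (0 : Fin (k + 1)) ∈ (Ak k).evalFrom ((Ak k).step q a) t := by
      rw [← hstep]; exact hq
    by_cases h1 : a < q
    · have hs : (Ak k).step q a = {q} := by simp [Ak, h1]
      rw [hs] at hq'
      rcases ih q hq' with ⟨rfl, rfl⟩ | ⟨u, w', rfl, hu, h0, hw', hg⟩
      · exact absurd h1 (by simp)
      · right
        refine ⟨a :: u, w', rfl, ?_, h0, hw', hg⟩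
        intro b hb
        rcases List.mem_cons.mp hb with rfl | hb
        · exact h1
        · exact hu b hb
    · by_cases h2 : q = a ∧ 0 < q
      · obtain ⟨rfl, h0⟩ := h2
        have hs : (Ak k).step q q = {p | p < q} := by
          simp [Ak, lt_irrefl, h0]
        rw [hs] at hq'
        rw [mem_evalFrom_iff] at hq'
        obtain ⟨p, hp, hq'⟩ := hq'
        have hpq : p < q := hp
        right
        rcases ih p hq' with ⟨rfl, rfl⟩ | ⟨u', t'', rfl, hu', hp0, ht'', hg⟩
        · exact ⟨[], [], rfl, by simp, h0, by simp, Good.nil⟩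
        · refine ⟨[], u' ++ p :: t'', rfl, by simp, h0, ?_, Good.block hu' ht'' hp0 hg⟩
          intro b hb
          rcases List.mem_append.mp hb with hb | hb
          · exact lt_trans (hu' b hb) hpq
          · rcases List.mem_cons.mp hb with rfl | hb'
            · exact hpq
            · exact lt_trans (ht'' b hb') hpq
      · have hs : (Ak k).step q a = ∅ := by simp [Ak, h1, h2]
        rw [hs, mem_evalFrom_iff] at hq'
        obtain ⟨p, hp, _⟩ := hq'
        exact absurd hp (Set.notMem_empty p)

lemma accepts_iff_good {k : ℕ} (w : List (Fin (k + 1))) :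
    w ∈ (Ak k).accepts ↔ Good w := by
  rw [NFA.mem_accepts]
  constructor
  · rintro ⟨s, hs, h⟩
    have hs0 : s = 0 := hs
    subst hs0
    rw [mem_evalFrom_iff] at h
    obtain ⟨q, _, h⟩ := h
    rcases run_char w q h with ⟨rfl, _⟩ | ⟨u, w', rfl, hu, h0, hw', hg⟩
    · exact Good.nil
    · exact Good.block hu hw' h0 hg
  · intro h
    refine ⟨0, rfl, ?_⟩
    cases h with
    | nil => exact Set.mem_univ _
    | @block c u w' hu hw hc hg =>
      have h1 : c ∈ (Ak k).evalFrom Set.univ u := stay hu (Set.mem_univ c)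
      have h2 : ({p | p < c} : Set (Fin (k + 1))) ⊆
          (Ak k).stepSet ((Ak k).evalFrom Set.univ u) c := by
        intro x hx
        rw [NFA.mem_stepSet]
        refine ⟨c, h1, ?_⟩
        simp only [Ak, lt_irrefl, if_false, hc, and_true, if_pos rfl]
        exact hx
      have h3 := good_eval hg c hw hc
      have h4 : (0 : Fin (k + 1)) ∈ (Ak k).evalFrom
          ((Ak k).stepSet ((Ak k).evalFrom Set.univ u) c) w' :=
        evalFrom_mono _ h2 w' h3
      have heq : u ++ c :: w' = (u ++ [c]) ++ w' := by simp
      show (0 : Fin (k + 1)) ∈ (Ak k).evalFrom (Ak k).start (u ++ c :: w')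
      rw [show (Ak k).start = Set.univ from rfl, heq, evalFrom_append, evalFrom_append]
      simpa using h4

/-! ### Subword lemmas -/

lemma keq_sublist {α : Type*} {n : ℕ} {u v : List α} (h : kEquiv n u v) {x : List α}
    (hx : x.length ≤ n) (hs : x.Sublist u) : x.Sublist v := by
  have hmem : x ∈ subk n u := ⟨hx, hs⟩
  rw [kEquiv] at h
  rw [h] at hmem
  exact hmem.2

lemma keq_symm {α : Type*} {n : ℕ} {u v : List α} (h : kEquiv n u v) : kEquiv n v u :=
  (Eq.symm h : subk n v = subk n u)

lemma keq_mono {α : Type*} {n n' : ℕ} (hn : n' ≤ n) {u v : List α} (h : kEquiv n u v) :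
    kEquiv n' u v := by
  unfold kEquiv subk at h ⊢
  ext x
  constructor
  · rintro ⟨h1, h2⟩
    exact ⟨h1, (h.le (show (x : List α) ∈ _ from ⟨h1.trans hn, h2⟩)).2⟩
  · rintro ⟨h1, h2⟩
    exact ⟨h1, (h.ge (show (x : List α) ∈ _ from ⟨h1.trans hn, h2⟩)).2⟩

lemma split_unique {α : Type*} {c : α} :
    ∀ {x₁ x₂ y₁ y₂ : List α}, x₁ ++ c :: y₁ = x₂ ++ c :: y₂ → c ∉ x₁ → c ∉ x₂ →
      x₁ = x₂ ∧ y₁ = y₂ := by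
  intro x₁
  induction x₁ with
  | nil =>
    intro x₂ y₁ y₂ h _ h2
    cases x₂ with
    | nil => simpa using h
    | cons b t =>
      simp only [List.nil_append, List.cons_append, List.cons.injEq] at h
      exact absurd (h.1 ▸ List.mem_cons_self (a := b) (l := t)) h2
  | cons a t ih =>
    intro x₂ y₁ y₂ h h1 h2
    cases x₂ with
    | nil =>
      simp only [List.nil_append, List.cons_append, List.cons.injEq] at h
      exact absurd (h.1 ▸ List.mem_cons_self (a := a) (l := t)) h1
    | cons b t₂ =>
      simp only [List.cons_append, List.cons.injEq] at h
      obtain ⟨rfl, h⟩ := h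
      obtain ⟨rfl, rfl⟩ := ih h (fun hc => h1 (List.mem_cons_of_mem _ hc))
        (fun hc => h2 (List.mem_cons_of_mem _ hc))
      exact ⟨rfl, rfl⟩

lemma tail_sub {α : Type*} {m : α} {v₁ v₂ x : List α}
    (h : (m :: x).Sublist (v₁ ++ m :: v₂)) (hm : m ∉ v₁) : x.Sublist v₂ := by
  rw [List.sublist_append_iff] at h
  obtain ⟨l₁, l₂, heq, hs1, hs2⟩ := h
  cases l₁ with
  | nil =>
    rw [List.nil_append] at heq
    rw [← heq] at hs2
    exact (List.cons_sublist_cons.mp hs2)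
  | cons b t =>
    simp only [List.cons_append, List.cons.injEq] at heq
    obtain ⟨rfl, _⟩ := heq
    exact absurd (hs1.subset (List.mem_cons_self (a := m) (l := t))) hm

lemma kEquiv_tail {α : Type*} {n : ℕ} {m : α} {u₁ u₂ v₁ v₂ : List α}
    (he : kEquiv (n + 1) (u₁ ++ m :: u₂) (v₁ ++ m :: v₂)) (h1 : m ∉ u₁) (h2 : m ∉ v₁) :
    kEquiv n u₂ v₂ := by
  unfold kEquiv subk
  ext x
  constructor
  · rintro ⟨hl, hs⟩
    have hmx : (m :: x).Sublist (u₁ ++ m :: u₂) :=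
      ((List.cons_sublist_cons.mpr hs).trans (List.sublist_append_right u₁ (m :: u₂)))
    have := keq_sublist he (by simpa using Nat.succ_le_succ hl) hmx
    exact ⟨hl, tail_sub this h2⟩
  · rintro ⟨hl, hs⟩
    have hmx : (m :: x).Sublist (v₁ ++ m :: v₂) :=
      ((List.cons_sublist_cons.mpr hs).trans (List.sublist_append_right v₁ (m :: v₂)))
    have := keq_sublist (keq_symm he) (by simpa using Nat.succ_le_succ hl) hmx
    exact ⟨hl, tail_sub this h1⟩

/-! ### Good facts -/

lemma good_count_le {k : ℕ} {w : List (Fin (k + 1))} (h : Good w) :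
    ∀ b : Fin (k + 1), (∀ a ∈ w, a ≤ b) → w.count b ≤ 1 := by
  induction h with
  | nil => simp
  | @block c u w' hu hw hc hg ih =>
    intro b hb
    have hcb : c ≤ b := hb c (by simp)
    rcases eq_or_lt_of_le hcb with rfl | hlt
    · have h1 : c ∉ u := fun hmem => absurd (hu c hmem) (lt_irrefl c)
      have h2 : c ∉ w' := fun hmem => absurd (hw c hmem) (lt_irrefl c)
      rw [List.count_append, List.count_cons]
      rw [List.count_eq_zero.mpr h1, List.count_eq_zero.mpr h2]
      simp
    · have h1 : b ∉ u := fun hmem => absurd (hu b hmem) (asymm hlt)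
      have h2 : b ∉ w' := fun hmem => absurd (hw b hmem) (asymm hlt)
      rw [List.count_append, List.count_cons]
      rw [List.count_eq_zero.mpr h1, List.count_eq_zero.mpr h2]
      split <;> simp

lemma good_inv {k : ℕ} {w : List (Fin (k + 1))} (h : Good w) (hne : w ≠ []) :
    ∃ (c : Fin (k + 1)) (u w' : List (Fin (k + 1))),
      w = u ++ c :: w' ∧ (∀ a ∈ u, a < c) ∧ (∀ a ∈ w', a < c) ∧ 0 < c ∧ Good w' := by
  cases h with
  | nil => exact absurd rfl hne
  | block hu hw hc hg => exact ⟨_, _, _, rfl, hu, hw, hc, hg⟩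

lemma good_iff_tail {k : ℕ} {m : Fin (k + 1)} {u₁ u₂ : List (Fin (k + 1))}
    (hmax : ∀ a ∈ u₁ ++ m :: u₂, a ≤ m) (h1 : m ∉ u₁) (h2 : m ∉ u₂) (hm : 0 < m) :
    Good (u₁ ++ m :: u₂) ↔ Good u₂ := by
  constructor
  · intro h
    obtain ⟨c, a, b, heq, ha, hb, hc, hg⟩ := good_inv h (by simp)
    have hcm : c ≤ m := hmax c (heq ▸ (by simp))
    have hmc : m = c := by
      have hmem : m ∈ a ++ c :: b := heq ▸ (by simp)
      rcases List.mem_append.mp hmem with hm' | hm'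
      · exact absurd (ha m hm') (not_lt.mpr hcm)
      · rcases List.mem_cons.mp hm' with h' | h'
        · exact h'
        · exact absurd (hb m h') (not_lt.mpr hcm)
    subst hmc
    have hma : m ∉ a := fun hmem => absurd (ha m hmem) (lt_irrefl m)
    obtain ⟨rfl, rfl⟩ := split_unique heq h1 hma
    exact hg
  · intro h
    refine Good.block ?_ ?_ hm h
    · intro a ha
      exact lt_of_le_of_ne (hmax a (by simp [ha])) (fun hae => h1 (hae ▸ ha))
    · intro a ha
      exact lt_of_le_of_ne (hmax a (by simp [ha])) (fun hae => h2 (hae ▸ ha))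

lemma not_good_of_dup {k : ℕ} {w : List (Fin (k + 1))} {m : Fin (k + 1)}
    (hmax : ∀ a ∈ w, a ≤ m) (hd : (2 : ℕ) ≤ w.count m) : ¬ Good w := by
  intro h
  exact absurd (good_count_le h m hmax) (by omega)

lemma exists_max {α : Type*} [LinearOrder α] :
    ∀ (l : List α), l ≠ [] → ∃ m ∈ l, ∀ a ∈ l, a ≤ m := by
  intro l
  induction l with
  | nil => intro h; exact absurd rfl h
  | cons a t ih =>
    intro _
    cases t with
    | nil => exact ⟨a, by simp, by simp⟩
    | cons b s =>
      obtain ⟨m, hm, hle⟩ := ih (by simp)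
      rcases le_total a m with h | h
      · exact ⟨m, by simp [hm], by
          intro x hx
          rcases List.mem_cons.mp hx with rfl | hx
          · exact h
          · exact hle x hx⟩
      · exact ⟨a, by simp, by
          intro x hx
          rcases List.mem_cons.mp hx with rfl | hx
          · exact le_refl _
          · exact (hle x hx).trans h⟩

/-! ### The main induction -/

lemma main {k : ℕ} :
    ∀ (c : ℕ) (u v : List (Fin (k + 1))),
      (∀ a ∈ u, (a : ℕ) ≤ c) → (∀ a ∈ v, (a : ℕ) ≤ c) → kEquiv (c + 1) u v →
      (Good u ↔ Good v) := by
  intro c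
  induction c using Nat.strong_induction_on with
  | _ c ih =>
    intro u v hu hv he
    -- empty cases
    rcases eq_or_ne u [] with rfl | hune
    · have hv0 : v = [] := by
        cases v with
        | nil => rfl
        | cons a t =>
          have : ([a] : List (Fin (k + 1))).Sublist ([] : List (Fin (k + 1))) :=
            keq_sublist (keq_symm he) (by simp) (by simp)
          simp at this
      subst hv0
      exact Iff.rfl
    rcases eq_or_ne v [] with rfl | hvne
    · exfalso
      cases u with
      | nil => exact hune rfl
      | cons a t =>
        have : ([a] : List (Fin (k + 1))).Sublist ([] : List (Fin (k + 1))) :=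
          keq_sublist he (by simp) (by simp)
        simp at this
    -- max letter
    obtain ⟨m, hmu, hmaxu⟩ := exists_max u hune
    have hmv : m ∈ v := by
      have : ([m] : List (Fin (k + 1))).Sublist v :=
        keq_sublist he (by simp) (by simpa using hmu)
      simpa using this
    have hmaxv : ∀ a ∈ v, a ≤ m := by
      intro a ha
      have : ([a] : List (Fin (k + 1))).Sublist u :=
        keq_sublist (keq_symm he) (by simp) (by simpa using ha)
      exact hmaxu a (by simpa using this)
    rcases Nat.eq_zero_or_pos (m : ℕ) with hm0 | hmpos
    · -- all letters are 0: never good (nonempty)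
      have hm : m = 0 := Fin.ext hm0
      subst hm
      constructor
      · intro h
        obtain ⟨c', _, _, heq, _, _, hc', _⟩ := good_inv h hune
        exact absurd (hmaxu c' (heq ▸ (by simp))) (not_le.mpr hc')
      · intro h
        obtain ⟨c', _, _, heq, _, _, hc', _⟩ := good_inv h hvne
        exact absurd (hmaxv c' (heq ▸ (by simp))) (not_le.mpr hc')
    · have hm : (0 : Fin (k + 1)) < m := by
        rw [Fin.lt_def]; exact hmpos
      have hc1 : 1 ≤ c := le_trans hmpos (hu m hmu)
      by_cases hdup : (List.replicate 2 m).Sublist u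
      · -- m appears at least twice in both
        have hdupv : (List.replicate 2 m).Sublist v :=
          keq_sublist he (by simp; omega) hdup
        have hcu : (2 : ℕ) ≤ u.count m := List.replicate_sublist_iff.mp hdup
        have hcv : (2 : ℕ) ≤ v.count m := List.replicate_sublist_iff.mp hdupv
        exact iff_of_false (not_good_of_dup hmaxu hcu) (not_good_of_dup hmaxv hcv)
      · -- m appears exactly once in both
        have hdupv : ¬ (List.replicate 2 m).Sublist v := fun h =>
          hdup (keq_sublist (keq_symm he) (by simp; omega) h)
        have hcu : u.count m = 1 := by
          have h1 : 1 ≤ u.count m := List.one_le_count_iff.mpr hmu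
          have h2 : ¬ (2 : ℕ) ≤ u.count m := fun h =>
            hdup (List.replicate_sublist_iff.mpr h)
          omega
        have hcv : v.count m = 1 := by
          have h1 : 1 ≤ v.count m := List.one_le_count_iff.mpr hmv
          have h2 : ¬ (2 : ℕ) ≤ v.count m := fun h =>
            hdupv (List.replicate_sublist_iff.mpr h)
          omega
        obtain ⟨u₁, u₂, rfl⟩ := List.append_of_mem hmu
        obtain ⟨v₁, v₂, rfl⟩ := List.append_of_mem hmv
        have hu12 : m ∉ u₁ ∧ m ∉ u₂ := by
          rw [List.count_append, List.count_cons_self] at hcu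
          constructor <;> rw [← List.count_eq_zero (a := m)] <;> omega
        have hv12 : m ∉ v₁ ∧ m ∉ v₂ := by
          rw [List.count_append, List.count_cons_self] at hcv
          constructor <;> rw [← List.count_eq_zero (a := m)] <;> omega
        -- tails are (c)-equivalent, letters bounded by m-1
        have hcm : (m : ℕ) ≤ c := hu m hmu
        have hetail : kEquiv c u₂ v₂ := kEquiv_tail he hu12.1 hv12.1
        have hetail' : kEquiv ((m : ℕ) - 1 + 1) u₂ v₂ := by
          exact keq_mono (by omega) hetail
        have hu2 : ∀ a ∈ u₂, (a : ℕ) ≤ (m : ℕ) - 1 := by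
          intro a ha
          have h1 : a ≤ m := hmaxu a (by simp [ha])
          have h2 : a ≠ m := fun h => hu12.2 (h ▸ ha)
          have : (a : ℕ) < (m : ℕ) := by
            rcases lt_of_le_of_ne h1 h2 with h
            exact h
          omega
        have hv2 : ∀ a ∈ v₂, (a : ℕ) ≤ (m : ℕ) - 1 := by
          intro a ha
          have h1 : a ≤ m := hmaxv a (by simp [ha])
          have h2 : a ≠ m := fun h => hv12.2 (h ▸ ha)
          have : (a : ℕ) < (m : ℕ) := by
            rcases lt_of_le_of_ne h1 h2 with h
            exact h
          omega
        have hiff : Good u₂ ↔ Good v₂ :=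
          ih ((m : ℕ) - 1) (by omega) u₂ v₂ hu2 hv2 hetail'
        rw [good_iff_tail hmaxu hu12.1 hu12.2 hm,
          good_iff_tail hmaxv hv12.1 hv12.2 hm]
        exact hiff

end Stmt11Aux

/-- The language `L(A_k)` is `(k+1)`-piecewise testable. -/
theorem stmt11 (k : ℕ) : IsPT (k + 1) (Ak k).accepts := by
  intro u v he
  rw [Stmt11Aux.accepts_iff_good, Stmt11Aux.accepts_iff_good]
  exact Stmt11Aux.main k u v (fun a _ => Fin.is_le a) (fun a _ => Fin.is_le a) he
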